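/- Suppose S ⊆ V is an independent set in G, the neighborhoods N(s), s ∈ S, are pairwise disjoint, and |N(s)| ≤ Δ for every s ∈ S. Then ∑_{S' ⊆ S} |B(S')| ≤ 2^{|V∖S|} · (2 − 2^{−Δ})^{|S|} (as real numbers). -/

import Mathlib

/-- `Bset G S S'` is `B(S')`: the collection of all subsets `V' ⊆ V∖S` with
`V' ∩ N(s) ≠ ∅` for every `s ∈ S'`. -/
def Bset {V : Type*} [Fintype V] [DecidableEq V] (G : SimpleGraph V) [DecidableRel G.Adj]
    (S S' : Finset V) : Finset (Finset V) :=
  (Finset.univ \ S).powerset.filter fun V' => ∀ s ∈ S', V' ∩ G.neighborFinset s ≠ ∅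

open Finset in
private lemma card_split_aux {V : Type*} [DecidableEq V] (T N : Finset V) (hN : N ⊆ T)
    (Q : Finset V → Prop) [DecidablePred Q]
    (hQ : ∀ V₀ W, W ⊆ N → (Q (V₀ ∪ W) ↔ Q V₀))
    (P : Finset (Finset V)) (hP : P ⊆ N.powerset) :
    (T.powerset.filter (fun V' => Q V' ∧ V' ∩ N ∈ P)).card
      = ((T \ N).powerset.filter Q).card * P.card := by
  rw [← Finset.card_product]
  apply Finset.card_bij' (fun V' _ => (V' \ N, V' ∩ N))
    (fun p _ => p.1 ∪ p.2)
  · intro V' hV'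
    simp only [mem_filter, mem_powerset] at hV'
    obtain ⟨hsub, hQV, hPV⟩ := hV'
    simp only [mem_product, mem_filter, mem_powerset]
    refine ⟨⟨sdiff_subset_sdiff hsub le_rfl, ?_⟩, hPV⟩
    have := (hQ (V' \ N) (V' ∩ N) inter_subset_right).mp
    rw [Finset.sdiff_union_inter] at this
    exact this hQV
  · intro p hp
    simp only [mem_product, mem_filter, mem_powerset] at hp
    obtain ⟨⟨h1, hQ1⟩, h2⟩ := hp
    have hWN : p.2 ⊆ N := mem_powerset.mp (hP h2)
    have hdis : Disjoint p.1 N := Finset.disjoint_of_subset_left h1 sdiff_disjoint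
    simp only [mem_filter, mem_powerset]
    refine ⟨union_subset (h1.trans sdiff_subset) (hWN.trans hN), ?_, ?_⟩
    · exact (hQ p.1 p.2 hWN).mpr hQ1
    · rw [union_inter_distrib_right, (Finset.inter_eq_left.mpr hWN),
        Finset.disjoint_iff_inter_eq_empty.mp hdis, empty_union]
      exact h2
  · intro V' _
    exact Finset.sdiff_union_inter V' N
  · intro p hp
    simp only [mem_product, mem_filter, mem_powerset] at hp
    obtain ⟨⟨h1, _⟩, h2⟩ := hp
    have hWN : p.2 ⊆ N := mem_powerset.mp (hP h2)
    have hdis : Disjoint p.1 N := Finset.disjoint_of_subset_left h1 sdiff_disjoint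
    have e1 : (p.1 ∪ p.2) \ N = p.1 := by
      rw [union_sdiff_distrib, sdiff_eq_self_of_disjoint hdis,
        Finset.sdiff_eq_empty_iff_subset.mpr hWN, union_empty]
    have e2 : (p.1 ∪ p.2) ∩ N = p.2 := by
      rw [union_inter_distrib_right, Finset.disjoint_iff_inter_eq_empty.mp hdis,
        Finset.inter_eq_left.mpr hWN, empty_union]
    exact Prod.ext e1 e2

open Finset in
private lemma Bset_insert_aux {V : Type*} [Fintype V] [DecidableEq V] (G : SimpleGraph V)
    [DecidableRel G.Adj] (S : Finset V)
    (hS : ∀ u ∈ S, ∀ v ∈ S, ¬ G.Adj u v)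
    (hdisj : ∀ s₁ ∈ S, ∀ s₂ ∈ S, s₁ ≠ s₂ →
      G.neighborFinset s₁ ∩ G.neighborFinset s₂ = ∅)
    (a : V) (ha : a ∈ S) (S'' : Finset V) (hsub : S'' ⊆ S) (ha'' : a ∉ S'') :
    (Bset G S (insert a S'')).card * 2 ^ (G.neighborFinset a).card
      = (2 ^ (G.neighborFinset a).card - 1) * (Bset G S S'').card := by
  classical
  set N := G.neighborFinset a with hNdef
  set T := (Finset.univ \ S : Finset V) with hTdef
  have hN : N ⊆ T := by
    intro v hv
    simp only [hTdef, mem_sdiff, mem_univ, true_and]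
    intro hvS
    exact hS a ha v hvS (by simpa [hNdef] using hv)
  set Q : Finset V → Prop := fun V' => ∀ s ∈ S'', V' ∩ G.neighborFinset s ≠ ∅ with hQdef
  have hQ : ∀ V₀ W, W ⊆ N → (Q (V₀ ∪ W) ↔ Q V₀) := by
    intro V₀ W hW
    have key : ∀ s ∈ S'', (V₀ ∪ W) ∩ G.neighborFinset s = V₀ ∩ G.neighborFinset s := by
      intro s hs
      have hne : a ≠ s := fun h => ha'' (h ▸ hs)
      have hd := hdisj a ha s (hsub hs) hne
      rw [union_inter_distrib_right]
      have : W ∩ G.neighborFinset s = ∅ := by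
        apply Finset.subset_empty.mp
        rw [← hd]
        exact inter_subset_inter hW le_rfl
      rw [this, union_empty]
    constructor <;> intro h s hs <;> have := h s hs
    · rwa [key s hs] at this
    · rwa [key s hs]
  have hPempty : (∅ : Finset V) ∈ N.powerset := mem_powerset.mpr (empty_subset _)
  have e1 : Bset G S (insert a S'')
      = T.powerset.filter (fun V' => Q V' ∧ V' ∩ N ∈ N.powerset.erase ∅) := by
    unfold Bset
    apply filter_congr
    intro V' hV'
    simp only [Finset.forall_mem_insert, mem_erase, mem_powerset, hQdef]
    constructor
    · rintro ⟨h1, h2⟩; exact ⟨h2, h1, inter_subset_right⟩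
    · rintro ⟨h2, h1, _⟩; exact ⟨h1, h2⟩
  have e2 : Bset G S S''
      = T.powerset.filter (fun V' => Q V' ∧ V' ∩ N ∈ N.powerset) := by
    unfold Bset
    apply filter_congr
    intro V' hV'
    simp only [mem_powerset, hQdef, inter_subset_right, and_true]
  rw [e1, e2,
    card_split_aux T N hN Q hQ (N.powerset.erase ∅) (erase_subset _ _),
    card_split_aux T N hN Q hQ N.powerset le_rfl,
    card_erase_of_mem hPempty, card_powerset]
  ring

open Finset in
private lemma Bset_card_eq {V : Type*} [Fintype V] [DecidableEq V] (G : SimpleGraph V)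
    [DecidableRel G.Adj] (S : Finset V)
    (hS : ∀ u ∈ S, ∀ v ∈ S, ¬ G.Adj u v)
    (hdisj : ∀ s₁ ∈ S, ∀ s₂ ∈ S, s₁ ≠ s₂ →
      G.neighborFinset s₁ ∩ G.neighborFinset s₂ = ∅)
    (S' : Finset V) (hS' : S' ⊆ S) :
    ((Bset G S S').card : ℝ)
      = 2 ^ (Finset.univ \ S).card
        * ∏ s ∈ S', (1 - (2:ℝ) ^ (-((G.neighborFinset s).card : ℤ))) := by
  classical
  induction S' using Finset.induction_on with
  | empty =>
      simp [Bset]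
  | @insert a S'' ha'' ih =>
      have haS : a ∈ S := hS' (mem_insert_self a S'')
      have hsub : S'' ⊆ S := (subset_insert a S'').trans hS'
      have hrec := Bset_insert_aux G S hS hdisj a haS S'' hsub ha''
      have hcast : ((Bset G S (insert a S'')).card : ℝ) * 2 ^ (G.neighborFinset a).card
          = (2 ^ (G.neighborFinset a).card - 1) * ((Bset G S S'').card : ℝ) := by
        have h1le : 1 ≤ 2 ^ (G.neighborFinset a).card := Nat.one_le_two_pow
        have := congrArg (Nat.cast : ℕ → ℝ) hrec
        push_cast [Nat.cast_sub h1le] at this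
        convert this using 2
      rw [ih hsub] at hcast
      rw [Finset.prod_insert ha'']
      set d := (G.neighborFinset a).card
      have h2 : (2:ℝ) ^ d ≠ 0 := by positivity
      have hz : (2:ℝ) ^ (-(d:ℤ)) = ((2:ℝ) ^ d)⁻¹ := by
        rw [zpow_neg, zpow_natCast]
      rw [hz]
      apply mul_right_cancel₀ h2
      rw [hcast]
      have h3 : (1 - ((2:ℝ) ^ d)⁻¹) * 2 ^ d = 2 ^ d - 1 := by
        rw [sub_mul, one_mul, inv_mul_cancel₀ h2]
      linear_combination (-(2 ^ (Finset.univ \ S).card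
        * ∏ s ∈ S'', (1 - (2:ℝ) ^ (-((G.neighborFinset s).card : ℤ))))) * h3

/-- If `S` is independent, the neighborhoods `N(s)`, `s ∈ S`, are pairwise
disjoint and of size at most `Δ`, then
`∑_{S' ⊆ S} |B(S')| ≤ 2^{|V∖S|} · (2 − 2^{−Δ})^{|S|}` (as real numbers). -/
theorem sum_card_Bset_le
    {V : Type*} [Fintype V] [DecidableEq V] (G : SimpleGraph V) [DecidableRel G.Adj]
    (Δ : ℕ) (S : Finset V) (hS : ∀ u ∈ S, ∀ v ∈ S, ¬ G.Adj u v)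
    (hdisj : ∀ s₁ ∈ S, ∀ s₂ ∈ S, s₁ ≠ s₂ →
      G.neighborFinset s₁ ∩ G.neighborFinset s₂ = ∅)
    (hdeg : ∀ s ∈ S, (G.neighborFinset s).card ≤ Δ) :
    ∑ S' ∈ S.powerset, ((Bset G S S').card : ℝ)
      ≤ 2 ^ (Finset.univ \ S).card * (2 - 2 ^ (-(Δ : ℤ)) : ℝ) ^ S.card := by
  classical
  set x : ℝ := (2:ℝ) ^ (-(Δ : ℤ)) with hxdef
  have hx0 : 0 < x := by positivity
  have hx1 : x ≤ 1 := zpow_le_one_of_nonpos₀ one_le_two (by simp)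
  have hbound : ∀ S' ∈ S.powerset,
      ((Bset G S S').card : ℝ) ≤ 2 ^ (Finset.univ \ S).card * (1 - x) ^ S'.card := by
    intro S' hS'
    rw [Finset.mem_powerset] at hS'
    rw [Bset_card_eq G S hS hdisj S' hS']
    gcongr 2 ^ (Finset.univ \ S).card * ?_
    rw [← Finset.prod_const]
    apply Finset.prod_le_prod
    · intro s hs
      have : (2:ℝ) ^ (-(((G.neighborFinset s).card : ℕ) : ℤ)) ≤ 1 :=
        zpow_le_one_of_nonpos₀ one_le_two (by simp)
      linarith
    · intro s hs
      have hd := hdeg s (hS' hs)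
      have : x ≤ (2:ℝ) ^ (-(((G.neighborFinset s).card : ℕ) : ℤ)) := by
        rw [hxdef]
        apply zpow_le_zpow_right₀ one_le_two
        omega
      linarith
  calc ∑ S' ∈ S.powerset, ((Bset G S S').card : ℝ)
      ≤ ∑ S' ∈ S.powerset, 2 ^ (Finset.univ \ S).card * (1 - x) ^ S'.card :=
        Finset.sum_le_sum hbound
    _ = 2 ^ (Finset.univ \ S).card * ∑ S' ∈ S.powerset, (1 - x) ^ S'.card := by
        rw [Finset.mul_sum]
    _ = 2 ^ (Finset.univ \ S).card * (2 - x) ^ S.card := by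
        congr 1
        have := Finset.prod_add (fun _ : V => (1 - x)) (fun _ : V => (1:ℝ)) S
        simp only [Finset.prod_const, one_pow, mul_one] at this
        have h2 : ((1 - x) + 1) = 2 - x := by ring
        rw [h2] at this
        rw [this]
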